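/- Let x be a random vector in ℝⁿ satisfying the Gaussian concentration property: ℙ[g(x) ≥ 𝔼[g(x)] + r] ≤ exp(−γr²/2) for every 1-Lipschitz g and r ≥ 0. Let μ = 𝔼[‖x‖] and α ∈ (0,1]. Then 𝔼[exp(−(γα²/2)‖x‖²)] ≤ 2·exp(−(γα²/(2(1+α)²))·μ²). -/

import Mathlib

open MeasureTheory ProbabilityTheory Real
open scoped RealInnerProductSpace ENNReal NNReal

theorem stmt_5 {Ω : Type*} [MeasurableSpace Ω] (μ : Measure Ω) [IsProbabilityMeasure μ]
    (n : ℕ) (γ α : ℝ) (hγ : 0 < γ) (hα0 : 0 < α) (hα1 : α ≤ 1)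
    (X : Ω → EuclideanSpace ℝ (Fin n)) (hXm : Measurable X)
    (hconc : ∀ g : EuclideanSpace ℝ (Fin n) → ℝ, LipschitzWith 1 g → ∀ r : ℝ, 0 ≤ r →
      μ {ω | (∫ ω', g (X ω') ∂μ) + r ≤ g (X ω)} ≤ ENNReal.ofReal (Real.exp (-γ * r^2 / 2))) :
    ∫ ω, Real.exp (-(γ * α^2 / 2) * ‖X ω‖^2) ∂μ ≤
      2 * Real.exp (-(γ * α^2 / (2*(1+α)^2)) * (∫ ω, ‖X ω‖ ∂μ)^2) := by
  set M := ∫ ω, ‖X ω‖ ∂μ with hMdef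
  have hM : 0 ≤ M := integral_nonneg fun ω => norm_nonneg _
  have h1α : (0:ℝ) < 1 + α := by linarith
  set t := M / (1 + α) with htdef
  have ht0 : 0 ≤ t := div_nonneg hM h1α.le
  set E := Real.exp (-(γ * α^2 / (2*(1+α)^2)) * M^2) with hEdef
  have hE0 : (0:ℝ) < E := Real.exp_pos _
  set f := fun ω => Real.exp (-(γ * α^2 / 2) * ‖X ω‖^2) with hfdef
  have hfmeas : Measurable f := by
    apply Real.measurable_exp.comp
    exact (measurable_const.mul ((hXm.norm).pow measurable_const))
  have hf0 : ∀ ω, 0 ≤ f ω := fun ω => (Real.exp_pos _).le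
  have hf1 : ∀ ω, f ω ≤ 1 := by
    intro ω
    rw [hfdef]
    simp only
    rw [show (1:ℝ) = Real.exp 0 by simp]
    apply Real.exp_le_exp.2
    have : 0 ≤ γ * α^2 / 2 * ‖X ω‖^2 := by positivity
    linarith
  have hint : Integrable f μ := by
    refine ⟨hfmeas.aestronglyMeasurable, ?_⟩
    apply HasFiniteIntegral.mono' (g := fun _ : Ω => (1:ℝ)) (hasFiniteIntegral_const 1)
    filter_upwards with ω
    rw [Real.norm_of_nonneg (hf0 ω)]; exact hf1 ω
  set A := {ω | t < ‖X ω‖} with hAdef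
  have hA : MeasurableSet A := measurableSet_lt measurable_const hXm.norm
  -- key concentration bound
  have key : μ Aᶜ ≤ ENNReal.ofReal E := by
    have hr0 : 0 ≤ α * M / (1 + α) := by positivity
    have hlip : LipschitzWith 1 (fun x : EuclideanSpace ℝ (Fin n) => -‖x‖) :=
      LipschitzWith.neg lipschitzWith_one_norm
    have h := hconc (fun x => -‖x‖) hlip (α * M / (1 + α)) hr0
    have hset : {ω | (∫ ω', -‖X ω'‖ ∂μ) + α * M / (1 + α) ≤ -‖X ω‖} = Aᶜ := by
      ext ω
      simp only [Set.mem_setOf_eq, Set.mem_compl_iff, hAdef, not_lt, integral_neg, ← hMdef]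
      have hid : -M + α * M / (1 + α) = -(M / (1 + α)) := by field_simp; ring
      constructor
      · intro h'
        rw [htdef]
        linarith [hid ▸ h']
      · intro h'
        rw [htdef] at h'
        rw [hid]
        linarith
    have hexp : -γ * (α * M / (1 + α))^2 / 2 = -(γ * α^2 / (2*(1+α)^2)) * M^2 := by
      field_simp
    rw [hset, hexp] at h
    exact h
  have hmuA : ((μ A).toReal : ℝ) ≤ 1 := by
    have := prob_le_one (μ := μ) (s := A)
    simpa using ENNReal.toReal_mono (by simp) this
  have hmuAc : ((μ Aᶜ).toReal : ℝ) ≤ E :=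
    ENNReal.toReal_le_of_le_ofReal hE0.le key
  have hsplit : ∫ ω, f ω ∂μ = (∫ ω in A, f ω ∂μ) + ∫ ω in Aᶜ, f ω ∂μ :=
    (integral_add_compl hA hint).symm
  have hb1 : ∫ ω in A, f ω ∂μ ≤ E := by
    have hfE : ∀ ω ∈ A, f ω ≤ E := by
      intro ω hω
      rw [hfdef, hEdef]
      simp only
      apply Real.exp_le_exp.2
      have hω' : t < ‖X ω‖ := hω
      have ht2 : t^2 ≤ ‖X ω‖^2 := by nlinarith
      have : -(γ * α^2 / (2*(1+α)^2)) * M^2 = -(γ * α^2 / 2) * t^2 := by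
        rw [htdef]; field_simp
      rw [this]
      have := mul_le_mul_of_nonneg_left ht2 (show (0:ℝ) ≤ γ * α^2 / 2 by positivity)
      linarith
    calc ∫ ω in A, f ω ∂μ ≤ ∫ _ω in A, E ∂μ := by
          apply setIntegral_mono_on hint.integrableOn (integrable_const E).integrableOn hA hfE
      _ = (μ A).toReal * E := by rw [setIntegral_const, smul_eq_mul]; rfl
      _ ≤ 1 * E := by nlinarith [ENNReal.toReal_nonneg (a := μ A)]
      _ = E := one_mul E
  have hb2 : ∫ ω in Aᶜ, f ω ∂μ ≤ E := by
    calc ∫ ω in Aᶜ, f ω ∂μ ≤ ∫ _ω in Aᶜ, (1:ℝ) ∂μ := by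
          apply setIntegral_mono_on hint.integrableOn (integrable_const 1).integrableOn hA.compl
          intro ω _; exact hf1 ω
      _ = (μ Aᶜ).toReal * 1 := by rw [setIntegral_const, smul_eq_mul]; rfl
      _ ≤ E := by linarith
  calc ∫ ω, f ω ∂μ = (∫ ω in A, f ω ∂μ) + ∫ ω in Aᶜ, f ω ∂μ := hsplit
    _ ≤ E + E := add_le_add hb1 hb2
    _ = 2 * E := by ring
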